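/- Assume λ − μ − 2s > 0 and s < −1. Let W ⊆ V contain at least one pair of distinct non-adjacent vertices, let c and p be natural numbers such that every clique of Γ contained in W has at most c vertices and p·c < |W|. Then P(W) cannot be written as a union of p subsets each of diameter strictly smaller than the diameter of P(W). -/

import Mathlib

open scoped RealInnerProductSpace

/-- The `i`-th column of `y = A - s·I`, where `A` is the real adjacency matrix of `G`,
viewed as a point of Euclidean space `ℝ^V`. -/
noncomputable def srgCol {V : Type*} [Fintype V] [DecidableEq V]
    (G : SimpleGraph V) [DecidableRel G.Adj] (s : ℝ) (i : V) : EuclideanSpace ℝ V :=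
  (WithLp.equiv 2 (V → ℝ)).symm fun j => (G.adjMatrix ℝ - s • (1 : Matrix V V ℝ)) j i

section aux
variable {V : Type*} [Fintype V] [DecidableEq V]
    (G : SimpleGraph V) [DecidableRel G.Adj] {v k l m : ℕ}

lemma srg_mul_self (hG : G.IsSRGWith v k l m) (s : ℝ) :
    (G.adjMatrix ℝ - s • (1 : Matrix V V ℝ)) * (G.adjMatrix ℝ - s • (1 : Matrix V V ℝ)) =
      ((k : ℝ) + s ^ 2) • (1 : Matrix V V ℝ) + ((l : ℝ) - 2 * s) • G.adjMatrix ℝ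
        + (m : ℝ) • Gᶜ.adjMatrix ℝ := by
  have h2 : G.adjMatrix ℝ ^ 2 = (k : ℝ) • (1 : Matrix V V ℝ) + (l : ℝ) • G.adjMatrix ℝ
      + (m : ℝ) • Gᶜ.adjMatrix ℝ := by
    have := hG.matrix_eq (α := ℝ)
    simpa only [← Nat.cast_smul_eq_nsmul ℝ] using this
  have hsq : G.adjMatrix ℝ * G.adjMatrix ℝ = G.adjMatrix ℝ ^ 2 := (sq _).symm
  rw [sub_mul, mul_sub, mul_sub, hsq, h2]
  simp only [Matrix.smul_mul, Matrix.mul_smul, Matrix.one_mul, Matrix.mul_one, smul_smul]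
  module

lemma srg_dist_sq (hG : G.IsSRGWith v k l m) (s : ℝ) {i j : V} (hij : i ≠ j) :
    dist (srgCol G s i) (srgCol G s j) ^ 2 =
      if G.Adj i j then 2 * ((k : ℝ) + s ^ 2) - 2 * ((l : ℝ) - 2 * s)
      else 2 * ((k : ℝ) + s ^ 2) - 2 * (m : ℝ) := by
  set y : Matrix V V ℝ := G.adjMatrix ℝ - s • (1 : Matrix V V ℝ) with hy
  have hsymm : ∀ a b : V, y a b = y b a := by
    intro a b
    simp [hy, Matrix.sub_apply, Matrix.smul_apply, Matrix.one_apply, SimpleGraph.adjMatrix_apply,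
      SimpleGraph.adj_comm, eq_comm]
  have hmul : ∀ a b : V, (y * y) a b = ∑ t, y t a * y t b := by
    intro a b
    rw [Matrix.mul_apply]
    exact Finset.sum_congr rfl fun t _ => by rw [hsymm a t]
  have hdist : dist (srgCol G s i) (srgCol G s j) ^ 2 = ∑ t, (y t i - y t j) ^ 2 := by
    rw [EuclideanSpace.dist_eq, Real.sq_sqrt (by positivity)]
    refine Finset.sum_congr rfl fun t _ => ?_
    rw [Real.dist_eq, sq_abs]
    rfl
  have hexp : ∑ t, (y t i - y t j) ^ 2
      = (y * y) i i + (y * y) j j - 2 * (y * y) i j := by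
    rw [hmul, hmul, hmul, Finset.mul_sum, ← Finset.sum_add_distrib, ← Finset.sum_sub_distrib]
    exact Finset.sum_congr rfl fun t _ => by ring
  have hentry := srg_mul_self G hG s
  rw [hdist, hexp, ← hy] at *
  rw [hentry]
  have hii : ¬ G.Adj i i := G.irrefl
  by_cases hadj : G.Adj i j
  · simp [Matrix.add_apply, Matrix.smul_apply, Matrix.one_apply, hij, hadj, hii,
      SimpleGraph.compl_adj]
    ring
  · simp [Matrix.add_apply, Matrix.smul_apply, Matrix.one_apply, hij, hadj, hii,
      SimpleGraph.compl_adj]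
    ring

end aux

theorem stmt_7 {V : Type*} [Fintype V] [DecidableEq V]
    (G : SimpleGraph V) [DecidableRel G.Adj] (v k l m : ℕ)
    (hG : G.IsSRGWith v k l m)
    (s : ℝ) (hsl : (l : ℝ) - m - 2 * s > 0) (hs : s < -1)
    (W : Set V)
    (hWnonadj : ∃ i ∈ W, ∃ j ∈ W, i ≠ j ∧ ¬G.Adj i j)
    (c p : ℕ)
    (hc : ∀ t : Set V, t ⊆ W → G.IsClique t → t.ncard ≤ c)
    (hpc : p * c < W.ncard) :
    ¬∃ F : Fin p → Set (EuclideanSpace ℝ V),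
        srgCol G s '' W = ⋃ a, F a ∧
        ∀ a, Metric.diam (F a) < Metric.diam (srgCol G s '' W) := by
  classical
  rintro ⟨F, hPW, hdiam⟩
  obtain ⟨i0, hi0, j0, hj0, hne0, hnadj0⟩ := hWnonadj
  set D2 : ℝ := 2 * ((k : ℝ) + s ^ 2) - 2 * (m : ℝ) with hD2
  have hD2eq : dist (srgCol G s i0) (srgCol G s j0) ^ 2 = D2 := by
    rw [srg_dist_sq G hG s hne0, if_neg hnadj0]
  have hD2nn : 0 ≤ D2 := hD2eq ▸ sq_nonneg _
  set D : ℝ := Real.sqrt D2 with hD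
  have hdistD : dist (srgCol G s i0) (srgCol G s j0) = D := by
    rw [hD, ← hD2eq, Real.sqrt_sq dist_nonneg]
  -- boundedness
  have hfin : (srgCol G s '' W).Finite := (Set.toFinite W).image _
  have hbdd : Bornology.IsBounded (srgCol G s '' W) := hfin.isBounded
  -- diameter upper bound
  have hdiam_le : Metric.diam (srgCol G s '' W) ≤ D := by
    refine Metric.diam_le_of_forall_dist_le (Real.sqrt_nonneg _) ?_
    rintro x ⟨i, _, rfl⟩ z ⟨j, _, rfl⟩
    rcases eq_or_ne i j with rfl | hij
    · simp only [dist_self]; exact Real.sqrt_nonneg D2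
    have hd := srg_dist_sq G hG s hij
    have hle : dist (srgCol G s i) (srgCol G s j) ^ 2 ≤ D2 := by
      rw [hd]; split_ifs with h
      · nlinarith
      · rw [hD2]
    calc dist (srgCol G s i) (srgCol G s j)
        = Real.sqrt (dist (srgCol G s i) (srgCol G s j) ^ 2) :=
          (Real.sqrt_sq dist_nonneg).symm
      _ ≤ D := by rw [hD]; exact Real.sqrt_le_sqrt hle
  -- the pieces: vertices mapping into F a
  set Wa : Fin p → Finset V :=
    fun a => Finset.univ.filter (fun i => i ∈ W ∧ srgCol G s i ∈ F a) with hWa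
  have hclique : ∀ a, G.IsClique (Wa a : Set V) := by
    intro a x hx y hy hxy
    simp only [hWa, Finset.coe_filter, Set.mem_setOf_eq] at hx hy
    by_contra hnadj
    have hdxy : dist (srgCol G s x) (srgCol G s y) = D := by
      have := srg_dist_sq G hG s hxy
      rw [if_neg hnadj] at this
      rw [hD, hD2, ← this, Real.sqrt_sq dist_nonneg]
    have hFsub : F a ⊆ srgCol G s '' W := hPW ▸ Set.subset_iUnion F a
    have hbdda : Bornology.IsBounded (F a) := hbdd.subset hFsub
    have h1 : D ≤ Metric.diam (F a) :=
      hdxy ▸ Metric.dist_le_diam_of_mem hbdda hx.2.2 hy.2.2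
    have h2 : D ≤ Metric.diam (srgCol G s '' W) :=
      hdistD ▸ Metric.dist_le_diam_of_mem hbdd ⟨i0, hi0, rfl⟩ ⟨j0, hj0, rfl⟩
    have := hdiam a
    linarith
  have hcard : ∀ a, (Wa a).card ≤ c := by
    intro a
    have := hc (Wa a : Set V) (fun x hx => by
      simp only [hWa, Finset.coe_filter, Set.mem_setOf_eq] at hx; exact hx.2.1) (hclique a)
    rwa [Set.ncard_coe_finset] at this
  -- W is covered by the Wa
  have hcover : W.toFinite.toFinset ⊆ Finset.univ.biUnion Wa := by
    intro x hx
    rw [Set.Finite.mem_toFinset] at hx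
    have : srgCol G s x ∈ ⋃ a, F a := hPW ▸ Set.mem_image_of_mem _ hx
    obtain ⟨a, ha⟩ := Set.mem_iUnion.mp this
    exact Finset.mem_biUnion.mpr ⟨a, Finset.mem_univ a, by
      simp [hWa, hx, ha]⟩
  have hle : W.ncard ≤ p * c := by
    have h1 : W.ncard = W.toFinite.toFinset.card := Set.ncard_eq_toFinset_card _ _
    calc W.ncard = W.toFinite.toFinset.card := h1
      _ ≤ (Finset.univ.biUnion Wa).card := Finset.card_le_card hcover
      _ ≤ ∑ a : Fin p, (Wa a).card := Finset.card_biUnion_le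
      _ ≤ ∑ _a : Fin p, c := Finset.sum_le_sum fun a _ => hcard a
      _ = p * c := by simp [Finset.sum_const, Finset.card_univ]
  omega
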